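/- Let X, Y, and Z be random variables, ζ := E[X | Y, Z], and let γ be any function of Y and Z. Suppose that, for some δ₁, δ₂ > 0, P{ ζ > γ(Y,Z) + √(Var(X | Y,Z)/δ₁) } ≥ 1 − δ₂. Then P{ X ≥ γ(Y,Z) } ≥ 1 − δ₁ − δ₂. -/

import Mathlib

open MeasureTheory

namespace RFFTest

open Filter Set


lemma cond_markov {Ω : Type*} (m : MeasurableSpace Ω) {m0 : MeasurableSpace Ω}
    (μ : Measure Ω) [IsProbabilityMeasure μ] (hm : m ≤ m0) (W V : Ω → ℝ)
    (hW : Integrable W μ) (hW0 : 0 ≤ᵐ[μ] W) (hVW : V =ᵐ[μ] μ[W|m])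
    (δ : ℝ) (hδ : 0 < δ) :
    μ {ω | V ω < δ * W ω} ≤ ENNReal.ofReal δ := by
  haveI : IsFiniteMeasure (μ.trim hm) := isFiniteMeasure_trim hm
  -- measurable version of W
  set W' : Ω → ℝ := hW.1.mk W with hW'def
  have hWW' : W =ᵐ[μ] W' := hW.1.ae_eq_mk
  have hW'sm : StronglyMeasurable[m0] W' := hW.1.stronglyMeasurable_mk
  have hW'int : Integrable W' μ := hW.congr hWW'
  have hW'0 : 0 ≤ᵐ[μ] W' := by
    filter_upwards [hW0, hWW'] with ω h1 h2; rw [← h2]; exact h1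
  set V0 : Ω → ℝ := μ[W|m] with hV0def
  have hV0m : StronglyMeasurable[m] V0 := stronglyMeasurable_condExp
  have hV0sm : StronglyMeasurable[m0] V0 := hV0m.mono hm
  have hV00 : 0 ≤ᵐ[μ] V0 := condExp_nonneg hW0
  have hcW' : μ[W'|m] =ᵐ[μ] V0 := condExp_congr_ae hWW'.symm
  set B : Set Ω := {ω | V0 ω < δ * W' ω} with hBdef
  have hB : MeasurableSet[m0] B :=
    measurableSet_lt hV0sm.measurable (measurable_const.mul hW'sm.measurable)
  set S : Set Ω := {ω | 0 < V0 ω} with hSdef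
  have hSm : MeasurableSet[m] S := measurableSet_lt measurable_const hV0m.measurable
  have hS : MeasurableSet[m0] S := hm _ hSm
  -- the set in question equals B up to null sets
  have heq : μ {ω | V ω < δ * W ω} = μ B := by
    refine measure_congr ?_
    rw [Filter.eventuallyEq_set]
    filter_upwards [hVW, hWW'] with ω h1 h2
    simp only [Set.mem_setOf_eq, hBdef, h1, h2]
  -- W' vanishes a.e. on Sᶜ
  have hW'zero : ∀ᵐ ω ∂μ, ω ∈ Sᶜ → W' ω = 0 := by
    have hint1 : ∫ x in Sᶜ, W' x ∂μ = ∫ x in Sᶜ, V0 x ∂μ := by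
      rw [← setIntegral_condExp hm hW'int hSm.compl]
      exact setIntegral_congr_ae (hm _ hSm.compl) (hcW'.mono fun ω h _ => h)
    have hle : ∫ x in Sᶜ, V0 x ∂μ ≤ 0 := by
      refine setIntegral_nonpos (hS.compl) fun ω hω => ?_
      simpa [hSdef] using hω
    have hge : 0 ≤ ∫ x in Sᶜ, W' x ∂μ := by
      refine setIntegral_nonneg_ae hS.compl ?_
      filter_upwards [hW'0] with ω h _; exact h
    have hzero : ∫ x in Sᶜ, W' x ∂μ = 0 := le_antisymm (hint1 ▸ hle) hge
    have := (setIntegral_eq_zero_iff_of_nonneg_ae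
      (ae_restrict_of_ae hW'0) hW'int.integrableOn).mp hzero
    exact (ae_restrict_iff' hS.compl).mp this
  have hnull : μ (B ∩ Sᶜ) = 0 := by
    rw [measure_eq_zero_iff_ae_notMem]
    filter_upwards [hV00, hW'zero] with ω h0 hz
    rintro ⟨hωB, hωS⟩
    have hw : W' ω = 0 := hz hωS
    have : V0 ω < δ * W' ω := hωB
    rw [hw, mul_zero] at this
    exact absurd this (not_lt.mpr h0)
  -- main bound on B ∩ S
  have hiB_int : Integrable (B.indicator (1 : Ω → ℝ)) μ := (integrable_const 1).indicator hB
  have hiB_sm : StronglyMeasurable[m0] (B.indicator (1 : Ω → ℝ)) :=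
    stronglyMeasurable_one.indicator hB
  have hiS_m : StronglyMeasurable[m] (S.indicator (1 : Ω → ℝ)) :=
    stronglyMeasurable_one.indicator hSm
  have hVB_int : Integrable (V0 * B.indicator (1 : Ω → ℝ)) μ := by
    have hV0int : Integrable V0 μ := integrable_condExp
    refine Integrable.mono hV0int ((hV0sm.mul hiB_sm).aestronglyMeasurable (μ := μ)) ?_
    filter_upwards with ω
    by_cases hω : ω ∈ B <;>
      simp [Set.indicator_of_mem, Set.indicator_of_notMem, hω, abs_nonneg]
  have key1 : V0 * B.indicator (1 : Ω → ℝ) ≤ᵐ[μ] δ • W' := by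
    filter_upwards [hW'0] with ω h0
    by_cases hω : ω ∈ B
    · have := le_of_lt (show V0 ω < δ * W' ω from hω)
      simpa [Set.indicator_of_mem, hω] using this
    · simp only [Pi.mul_apply, Set.indicator_of_notMem hω, mul_zero, Pi.smul_apply,
        smul_eq_mul]
      exact mul_nonneg hδ.le h0
  have key2 : μ[V0 * B.indicator (1 : Ω → ℝ)|m] ≤ᵐ[μ] μ[δ • W'|m] :=
    condExp_mono hVB_int (hW'int.smul δ) key1
  have pull : μ[V0 * B.indicator (1 : Ω → ℝ)|m] =ᵐ[μ] V0 * μ[B.indicator (1 : Ω → ℝ)|m] :=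
    condExp_mul_of_stronglyMeasurable_left hV0m hVB_int hiB_int
  have smul1 : μ[δ • W'|m] =ᵐ[μ] δ • V0 := by
    refine (condExp_smul δ W' m).trans ?_
    filter_upwards [hcW'] with ω h
    simp [h]
  have hkey : ∀ᵐ ω ∂μ, V0 ω * (μ[B.indicator (1 : Ω → ℝ)|m]) ω ≤ δ * V0 ω := by
    filter_upwards [key2, pull, smul1] with ω h2 hp hs
    have := hp ▸ h2
    calc V0 ω * (μ[B.indicator (1 : Ω → ℝ)|m]) ω
        = (V0 * μ[B.indicator (1 : Ω → ℝ)|m]) ω := rfl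
      _ ≤ (μ[δ • W'|m]) ω := by rw [← hp]; exact h2
      _ = δ * V0 ω := by rw [hs]; simp
  have hfinal : S.indicator (1 : Ω → ℝ) * μ[B.indicator (1 : Ω → ℝ)|m] ≤ᵐ[μ]
      fun _ => δ := by
    filter_upwards [hkey] with ω hk
    by_cases hω : ω ∈ S
    · have hpos : 0 < V0 ω := hω
      have : (μ[B.indicator (1 : Ω → ℝ)|m]) ω ≤ δ := by nlinarith
      simpa [Set.indicator_of_mem, hω] using this
    · simp [Set.indicator_of_notMem, hω, hδ.le]
  have hiSB_int : Integrable ((S ∩ B).indicator (1 : Ω → ℝ)) μ :=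
    (integrable_const 1).indicator (hS.inter hB)
  have hmain : μ (S ∩ B) ≤ ENNReal.ofReal δ := by
    have h1 : ∫ ω, (S ∩ B).indicator (1 : Ω → ℝ) ω ∂μ = (μ (S ∩ B)).toReal :=
      integral_indicator_one (hS.inter hB)
    have h2 : ∫ ω, (S ∩ B).indicator (1 : Ω → ℝ) ω ∂μ
        = ∫ ω, (μ[(S ∩ B).indicator (1 : Ω → ℝ)|m]) ω ∂μ := (integral_condExp hm).symm
    have hprod : (S ∩ B).indicator (1 : Ω → ℝ)
        = S.indicator (1 : Ω → ℝ) * B.indicator (1 : Ω → ℝ) := Set.inter_indicator_one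
    have pull2 : μ[(S ∩ B).indicator (1 : Ω → ℝ)|m] =ᵐ[μ]
        S.indicator (1 : Ω → ℝ) * μ[B.indicator (1 : Ω → ℝ)|m] := by
      rw [hprod]
      exact condExp_mul_of_stronglyMeasurable_left hiS_m (hprod ▸ hiSB_int) hiB_int
    have h3 : ∫ ω, (μ[(S ∩ B).indicator (1 : Ω → ℝ)|m]) ω ∂μ ≤ ∫ _ω, δ ∂μ := by
      refine integral_mono_ae integrable_condExp (integrable_const δ) ?_
      exact pull2.le.trans hfinal
    have h4 : ∫ _ω, δ ∂μ = δ := by simp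
    have h5 : (μ (S ∩ B)).toReal ≤ δ := by
      rw [← h1, h2]; rw [h4] at h3; exact h3
    calc μ (S ∩ B) = ENNReal.ofReal (μ (S ∩ B)).toReal := by
          rw [ENNReal.ofReal_toReal (measure_ne_top μ _)]
      _ ≤ ENNReal.ofReal δ := ENNReal.ofReal_le_ofReal h5
  calc μ {ω | V ω < δ * W ω} = μ B := heq
    _ = μ ((B ∩ S) ∪ (B ∩ Sᶜ)) := by rw [Set.inter_union_compl]
    _ ≤ μ (B ∩ S) + μ (B ∩ Sᶜ) := measure_union_le _ _
    _ = μ (B ∩ S) := by rw [hnull, add_zero]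
    _ = μ (S ∩ B) := by rw [Set.inter_comm]
    _ ≤ ENNReal.ofReal δ := hmain

theorem aux {Ω β γ' : Type*} (m : MeasurableSpace Ω) {m0 : MeasurableSpace Ω}
    [MeasurableSpace β] [MeasurableSpace γ']
    (μ : Measure Ω) [IsProbabilityMeasure μ]
    (X : Ω → ℝ) (Y : Ω → β) (Z : Ω → γ')
    (hY : Measurable[m0] Y) (hZ : Measurable[m0] Z)
    (hX : Integrable (fun ω => X ω ^ 2) μ)
    (g : β × γ' → ℝ) (δ₁ δ₂ : ℝ) (hδ₁ : 0 < δ₁) (hδ₂ : 0 < δ₂)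
    (hm : m = MeasurableSpace.comap (fun ω => (Y ω, Z ω)) inferInstance)
    (ζ V : Ω → ℝ) (hζ : ζ = μ[X | m])
    (hV : V = fun ω => (μ[fun ω' => X ω' ^ 2 | m]) ω - ζ ω ^ 2)
    (hhyp : ENNReal.ofReal (1 - δ₂) ≤
      μ {ω | g (Y ω, Z ω) + Real.sqrt (V ω / δ₁) < ζ ω}) :
    ENNReal.ofReal (1 - δ₁ - δ₂) ≤ μ {ω | g (Y ω, Z ω) ≤ X ω} := by
  have hm_le : m ≤ m0 := by rw [hm]; exact Measurable.comap_le (hY.prodMk hZ)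
  haveI : IsFiniteMeasure (μ.trim hm_le) := isFiniteMeasure_trim hm_le
  have hζm : StronglyMeasurable[m] ζ := hζ ▸ stronglyMeasurable_condExp
  have hW0 : 0 ≤ᵐ[μ] fun ω => (X ω - ζ ω) ^ 2 :=
    Eventually.of_forall fun ω => sq_nonneg _
  have hmain : Integrable (fun ω => (X ω - ζ ω) ^ 2) μ ∧
      V =ᵐ[μ] μ[fun ω => (X ω - ζ ω) ^ 2|m] := by
    by_cases hXint : Integrable X μ
    · -- X is integrable, hence in L²
      have hX2 : MemLp X 2 μ := (memLp_two_iff_integrable_sq hXint.1).mpr hX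
      have hζL2 : MemLp ζ 2 μ := by
        have hae : ((condExpL2 ℝ ℝ hm_le (hX2.toLp X) : Lp ℝ 2 μ) : Ω → ℝ)
            =ᵐ[μ] μ[X|m] := by
          refine ae_eq_condExp_of_forall_setIntegral_eq hm_le hXint
            (fun s hs hμs => integrableOn_condExpL2_of_measure_ne_top hm_le hμs.ne _)
            (fun s hs hμs => ?_) (aestronglyMeasurable_condExpL2 hm_le _)
          rw [integral_condExpL2_eq hm_le (hX2.toLp X) hs hμs.ne]
          exact setIntegral_congr_ae (hm_le s hs) ((hX2.coeFn_toLp).mono fun ω h _ => h)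
        exact hζ ▸ (Lp.memLp _).ae_eq hae
      have hζint : Integrable ζ μ := hζL2.integrable one_le_two
      have hζ2int : Integrable (fun ω => ζ ω ^ 2) μ := hζL2.integrable_sq
      have hζXint : Integrable (fun ω => ζ ω * X ω) μ := by
        have h : Integrable (fun ω => ((ζ ω + X ω) ^ 2 - ζ ω ^ 2 - X ω ^ 2) / 2) μ :=
          (((hζL2.add hX2).integrable_sq.sub hζ2int).sub hX).div_const 2
        have he : (fun ω => ((ζ ω + X ω) ^ 2 - ζ ω ^ 2 - X ω ^ 2) / 2)
            = fun ω => ζ ω * X ω := by funext ω; ring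
        rwa [he] at h
      have hw_int : Integrable (fun ω => 2 * X ω - ζ ω) μ := (hXint.const_mul 2).sub hζint
      have hζw_int : Integrable (fun ω => ζ ω * (2 * X ω - ζ ω)) μ := by
        have h : Integrable (fun ω => 2 * (ζ ω * X ω) - ζ ω ^ 2) μ :=
          (hζXint.const_mul 2).sub hζ2int
        have he : (fun ω => 2 * (ζ ω * X ω) - ζ ω ^ 2)
            = fun ω => ζ ω * (2 * X ω - ζ ω) := by funext ω; ring
        rwa [he] at h
      have hWint : Integrable (fun ω => (X ω - ζ ω) ^ 2) μ := by
        have h : Integrable (fun ω => X ω ^ 2 - ζ ω * (2 * X ω - ζ ω)) μ :=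
          hX.sub hζw_int
        have he : (fun ω => X ω ^ 2 - ζ ω * (2 * X ω - ζ ω))
            = fun ω => (X ω - ζ ω) ^ 2 := by funext ω; ring
        rwa [he] at h
      refine ⟨hWint, ?_⟩
      have hpull : μ[fun ω => ζ ω * (2 * X ω - ζ ω)|m] =ᵐ[μ]
          fun ω => ζ ω * (μ[fun ω' => 2 * X ω' - ζ ω'|m]) ω :=
        condExp_mul_of_stronglyMeasurable_left hζm hζw_int hw_int
      have hc2X : μ[fun ω => 2 * X ω|m] =ᵐ[μ] fun ω => 2 * ζ ω := by
        rw [hζ]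
        exact condExp_smul (μ := μ) (m := m) (2 : ℝ) X
      have hcζ : μ[ζ|m] = ζ := condExp_of_stronglyMeasurable hm_le hζm hζint
      have hcw : μ[fun ω => 2 * X ω - ζ ω|m] =ᵐ[μ] fun ω => 2 * ζ ω - ζ ω := by
        have h := condExp_sub (μ := μ) (m := m) (hXint.const_mul 2) hζint
        refine h.trans ?_
        rw [hcζ]
        filter_upwards [hc2X] with ω hω
        simp only [Pi.sub_apply, hω]
      have h1 : μ[fun ω => (X ω - ζ ω) ^ 2|m] =ᵐ[μ]
          μ[fun ω => X ω ^ 2|m] - μ[fun ω => ζ ω * (2 * X ω - ζ ω)|m] := by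
        have he : (fun ω => (X ω - ζ ω) ^ 2)
            = fun ω => X ω ^ 2 - ζ ω * (2 * X ω - ζ ω) := by funext ω; ring
        rw [he]
        exact condExp_sub hX hζw_int m
      filter_upwards [h1, hpull, hcw] with ω e1 e2 e3
      rw [hV]
      simp only [Pi.sub_apply] at e1
      rw [e1, e2, e3]
      ring
    · -- X not integrable: junk value ζ = 0
      have hζ0 : ζ = 0 := by rw [hζ]; exact condExp_of_not_integrable hXint
      have hfun : (fun ω => (X ω - ζ ω) ^ 2) = fun ω => X ω ^ 2 := by
        funext ω; rw [hζ0]; simp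
      refine ⟨by rw [hfun]; exact hX, ?_⟩
      have hVeq : V = fun ω => (μ[fun ω' => X ω' ^ 2|m]) ω := by
        rw [hV]; funext ω; rw [hζ0]; simp
      rw [hVeq, hfun]
  obtain ⟨hWint, hVW⟩ := hmain
  have hBle : μ {ω | V ω < δ₁ * (X ω - ζ ω) ^ 2} ≤ ENNReal.ofReal δ₁ :=
    cond_markov m μ hm_le _ V hWint hW0 hVW δ₁ hδ₁
  set A : Set Ω := {ω | g (Y ω, Z ω) + Real.sqrt (V ω / δ₁) < ζ ω} with hA
  set B : Set Ω := {ω | V ω < δ₁ * (X ω - ζ ω) ^ 2} with hB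
  have hsub : A \ B ⊆ {ω | g (Y ω, Z ω) ≤ X ω} := by
    rintro ω ⟨hωA, hωB⟩
    have hA' : g (Y ω, Z ω) + Real.sqrt (V ω / δ₁) < ζ ω := hωA
    have hnb : δ₁ * (X ω - ζ ω) ^ 2 ≤ V ω := not_lt.mp hωB
    have h1 : (X ω - ζ ω) ^ 2 ≤ V ω / δ₁ := by
      rw [le_div_iff₀ hδ₁]; linarith
    have h2 : ζ ω - X ω ≤ Real.sqrt (V ω / δ₁) := by
      have hs := Real.sqrt_le_sqrt h1
      rw [Real.sqrt_sq_eq_abs] at hs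
      have habs : ζ ω - X ω ≤ |X ω - ζ ω| := by
        rw [abs_sub_comm]; exact le_abs_self _
      linarith
    show g (Y ω, Z ω) ≤ X ω
    linarith
  have hsplit : μ A ≤ μ (A \ B) + μ B := by
    refine le_trans (measure_mono ?_) (measure_union_le _ _)
    intro ω hω
    by_cases hb : ω ∈ B
    · exact Or.inr hb
    · exact Or.inl ⟨hω, hb⟩
  calc ENNReal.ofReal (1 - δ₁ - δ₂)
      = ENNReal.ofReal ((1 - δ₂) - δ₁) := by rw [show 1 - δ₁ - δ₂ = 1 - δ₂ - δ₁ by ring]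
    _ = ENNReal.ofReal (1 - δ₂) - ENNReal.ofReal δ₁ := ENNReal.ofReal_sub _ hδ₁.le
    _ ≤ μ A - μ B := tsub_le_tsub hhyp hBle
    _ ≤ μ (A \ B) := tsub_le_iff_right.mpr hsplit
    _ ≤ μ {ω | g (Y ω, Z ω) ≤ X ω} := measure_mono hsub


/-- **Lemma (power via conditional Chebyshev).**
Let `X`, `Y`, `Z` be random variables on a probability space, `m` the σ-algebra generated
by `(Y, Z)`, `ζ = E[X | Y, Z]` the conditional expectation and
`V = E[X² | Y, Z] − ζ²` the conditional variance of `X` given `(Y, Z)`, and let `g` be any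
function of `(Y, Z)`.  Suppose that, for some `δ₁, δ₂ > 0`,
`P{ζ > g(Y,Z) + √(V/δ₁)} ≥ 1 − δ₂`.  Then `P{X ≥ g(Y,Z)} ≥ 1 − δ₁ − δ₂`. -/
theorem power_from_conditional_mean_variance
    {Ω β γ' : Type*} [MeasurableSpace Ω] [MeasurableSpace β] [MeasurableSpace γ']
    (μ : Measure Ω) [IsProbabilityMeasure μ]
    (X : Ω → ℝ) (Y : Ω → β) (Z : Ω → γ')
    (hY : Measurable Y) (hZ : Measurable Z)
    (hX : Integrable (fun ω => X ω ^ 2) μ)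
    (g : β × γ' → ℝ)
    (δ₁ δ₂ : ℝ) (hδ₁ : 0 < δ₁) (hδ₂ : 0 < δ₂)
    (m : MeasurableSpace Ω)
    (hm : m = MeasurableSpace.comap (fun ω => (Y ω, Z ω)) inferInstance)
    (ζ V : Ω → ℝ)
    (hζ : ζ = μ[X | m])
    (hV : V = fun ω => (μ[fun ω' => X ω' ^ 2 | m]) ω - ζ ω ^ 2)
    (hhyp : ENNReal.ofReal (1 - δ₂) ≤
      μ {ω | g (Y ω, Z ω) + Real.sqrt (V ω / δ₁) < ζ ω}) :
    ENNReal.ofReal (1 - δ₁ - δ₂) ≤ μ {ω | g (Y ω, Z ω) ≤ X ω} := by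
  exact aux m μ X Y Z hY hZ hX g δ₁ δ₂ hδ₁ hδ₂ hm ζ V hζ hV hhyp

end RFFTest
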